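/- arXiv:2210.06848 — 2 statements merged into one kernel-verified Lean document; each statement's English description precedes it below -/
import Mathlib

section
/- Let X be a compact Hausdorff uniform space, f_{0,∞} a sequence of continuous self-maps of X, A = (a_{ij}) an N×N transition matrix, and V₁,…,V_N nonempty, closed, mutually disjoint subsets of X. Assume (i) f_n(V_i) ⊇ ⋃_{j : a_{ij}=1} V_j for all i and n (A-coupled-expansion), and (ii) f_{0,∞} is equi-continuous on ⋃ V_i. Then for each n there exist a nonempty compact set Λ_n ⊂ ⋃_{i=1}^N V_i with f_n(Λ_n) = Λ_{n+1} and a surjective map h_n : Λ_n → Σ_N^+(A) such that h_{n+1} ∘ f_n = σ_A ∘ h_n and {h_n} is equi-continuous; consequently h(f_{0,∞}, Λ_0) ≥ log λ(A), the log of the spectral radius of A. -/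
open Filter Set
open scoped Uniformity

/-- `itr f i n = f (i+n-1) ∘ ⋯ ∘ f i`, the composition of `n` maps of the sequence `f`
starting at index `i` (so `itr f i 0 = id`). -/
def itr {X : Type*} (f : ℕ → X → X) (i : ℕ) : ℕ → X → X
  | 0 => id
  | n + 1 => fun x => f (i + n) (itr f i n x)

/-- `E` is an `(n,γ)`-separated set for the nonautonomous system `f`. -/
def IsSep {X : Type*} (f : ℕ → X → X) (n : ℕ) (γ : Set (X × X)) (E : Set X) : Prop :=
  ∀ x ∈ E, ∀ y ∈ E, x ≠ y → ∃ j < n, (itr f 0 j x, itr f 0 j y) ∉ γ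

/-- `F` `(n,γ)`-spans the set `K` for the nonautonomous system `f`. -/
def Spans {X : Type*} (f : ℕ → X → X) (n : ℕ) (γ : Set (X × X)) (F K : Set X) : Prop :=
  ∀ x ∈ K, ∃ y ∈ F, ∀ j < n, (itr f 0 j x, itr f 0 j y) ∈ γ

/-- Maximal cardinality of an `(n,γ)`-separated subset of `Λ`. -/
noncomputable def sepCard {X : Type*} (f : ℕ → X → X) (Λ : Set X) (n : ℕ)
    (γ : Set (X × X)) : ℕ :=
  sSup {m | ∃ E : Finset X, ↑E ⊆ Λ ∧ IsSep f n γ ↑E ∧ E.card = m}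

/-- Minimal cardinality of a subset of `Λ` that `(n,γ)`-spans `Λ`. -/
noncomputable def spanCard {X : Type*} (f : ℕ → X → X) (Λ : Set X) (n : ℕ)
    (γ : Set (X × X)) : ℕ :=
  sInf {m | ∃ F : Finset X, ↑F ⊆ Λ ∧ Spans f n γ ↑F Λ ∧ F.card = m}


/-- Topological entropy of the nonautonomous system `f` on the set `Λ`, defined via
separated sets; by antitonicity in the entourage, the supremum over all entourages agrees
with the limit along the net of symmetric open entourages used in the paper. -/
noncomputable def entropy {X : Type*} [UniformSpace X] (f : ℕ → X → X) (Λ : Set X) : EReal :=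
  ⨆ γ ∈ 𝓤 X, atTop.limsup fun n : ℕ =>
    ((Real.log (sepCard f Λ n γ) / n : ℝ) : EReal)

/-- The one-sided subshift of finite type `Σ_N^+(A)` determined by the transition
matrix `A`. -/
def SigmaA {N : ℕ} (A : Matrix (Fin N) (Fin N) ℕ) : Type :=
  {s : ℕ → Fin N // ∀ j : ℕ, A (s j) (s (j + 1)) = 1}

/-- The shift map `σ_A` on `Σ_N^+(A)`. -/
def shiftA {N : ℕ} {A : Matrix (Fin N) (Fin N) ℕ} (s : SigmaA A) : SigmaA A :=
  ⟨fun j => s.1 (j + 1), fun j => s.2 (j + 1)⟩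

/-- The metric `ρ(α, β) = ∑_i d(α_i, β_i)/2^i` on `Σ_N^+(A)`. -/
noncomputable def rho {N : ℕ} {A : Matrix (Fin N) (Fin N) ℕ} (α β : SigmaA A) : ℝ :=
  ∑' i : ℕ, if α.1 i = β.1 i then 0 else (1 / 2 : ℝ) ^ i

/-- The spectral radius `λ(A) = lim ‖Aⁿ‖^{1/n}` of the transition matrix `A`
(Gelfand formula, with `‖A‖` the sum of all entries). -/
noncomputable def lamA {N : ℕ} (A : Matrix (Fin N) (Fin N) ℕ) : ℝ :=
  Filter.atTop.limsup fun n : ℕ =>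
    ((∑ i : Fin N, ∑ j : Fin N, (A ^ n) i j : ℕ) : ℝ) ^ ((n : ℝ)⁻¹)

/-- `A` is a transition matrix: all entries are `0` or `1` and every row and every column
contains a `1`. -/
def IsTransition {N : ℕ} (A : Matrix (Fin N) (Fin N) ℕ) : Prop :=
  (∀ i j, A i j = 0 ∨ A i j = 1) ∧ (∀ i, ∃ j, A i j = 1) ∧ (∀ j, ∃ i, A i j = 1)

namespace CE
open scoped Classical
set_option linter.unusedSectionVars false

variable {X : Type*} (f : ℕ → X → X) {N : ℕ} (A : Matrix (Fin N) (Fin N) ℕ)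
  (V : Fin N → Set X)

theorem itr_zero (i : ℕ) (x : X) : itr f i 0 x = x := rfl
theorem itr_succ (i n : ℕ) (x : X) : itr f i (n+1) x = f (i+n) (itr f i n x) := rfl

theorem itr_shift (n : ℕ) : ∀ (k : ℕ) (x : X), itr f (n+1) k (f n x) = itr f n (k+1) x := by
  intro k
  induction k with
  | zero => intro x; rfl
  | succ k ih => intro x; rw [itr_succ, ih, itr_succ]; congr 1; omega

theorem itr_cont [TopologicalSpace X] (hf : ∀ n, Continuous (f n)) (i k : ℕ) :
    Continuous (itr f i k) := by
  induction k with
  | zero => exact continuous_id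
  | succ k ih => exact (hf (i+k)).comp ih

def Wset (m : ℕ) : Set X := ⋃ i, ⋃ j, ⋃ _ : A i j = 1, (V i ∩ f m ⁻¹' V j)

def Lam (n : ℕ) : Set X := ⋂ k, itr f n k ⁻¹' Wset f A V (n + k)

theorem exists_mem_V (n : ℕ) {x : X} (hx : x ∈ Lam f A V n) (k : ℕ) :
    ∃ i, itr f n k x ∈ V i := by
  have h0 := mem_iInter.1 hx k
  simp only [mem_preimage, Wset, mem_iUnion] at h0
  obtain ⟨i, j, hij, hxi, -⟩ := h0
  exact ⟨i, hxi⟩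

variable [NeZero N]

/-- the coding symbol of `x` at time `k` (for the system started at `n`). -/
noncomputable def code (n : ℕ) (x : X) (k : ℕ) : Fin N :=
  if h : ∃ i, itr f n k x ∈ V i then h.choose else 0

theorem code_unique (hVdisj : ∀ i j, i ≠ j → Disjoint (V i) (V j))
    {n k : ℕ} {x : X} {i : Fin N} (hi : itr f n k x ∈ V i) : code f V n x k = i := by
  classical
  have h : ∃ i, itr f n k x ∈ V i := ⟨i, hi⟩
  simp only [code]
  rw [dif_pos h]
  by_contra hne
  exact (hVdisj _ _ hne).le_bot ⟨h.choose_spec, hi⟩ 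

theorem code_mem (n : ℕ) {x : X} (hx : x ∈ Lam f A V n) (k : ℕ) :
    itr f n k x ∈ V (code f V n x k) := by
  classical
  have h := exists_mem_V f A V n hx k
  simp only [code]
  rw [dif_pos h]
  exact h.choose_spec

theorem code_trans (hVdisj : ∀ i j, i ≠ j → Disjoint (V i) (V j)) (n : ℕ) {x : X}
    (hx : x ∈ Lam f A V n) (k : ℕ) :
    A (code f V n x k) (code f V n x (k+1)) = 1 := by
  have h0 := mem_iInter.1 hx k
  simp only [mem_preimage, Wset, mem_iUnion] at h0
  obtain ⟨i, j, hij, hxi, hxj⟩ := h0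
  rw [code_unique f V hVdisj hxi, code_unique f V hVdisj (show itr f n (k+1) x ∈ V j from hxj)]
  exact hij

/-- next admissible symbol -/
noncomputable def nxt (hA : ∀ i, ∃ j, A i j = 1) (i : Fin N) : Fin N := (hA i).choose

theorem nxt_spec (hA : ∀ i, ∃ j, A i j = 1) (i : Fin N) : A i (nxt A hA i) = 1 :=
  (hA i).choose_spec

/-- admissible sequence starting at `i` -/
noncomputable def extSeq (hA : ∀ i, ∃ j, A i j = 1) (i : Fin N) : ℕ → Fin N
  | 0 => i
  | k + 1 => nxt A hA (extSeq hA i k)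

theorem extSeq_spec (hA : ∀ i, ∃ j, A i j = 1) (i : Fin N) (k : ℕ) :
    A (extSeq A hA i k) (extSeq A hA i (k+1)) = 1 := nxt_spec A hA _

/-- a default point of `SigmaA A` -/
noncomputable def defSigma (hA : ∀ i, ∃ j, A i j = 1) : SigmaA A :=
  ⟨extSeq A hA 0, extSeq_spec A hA 0⟩

/-- The coding map `h_n`, as a total map `X → SigmaA A`. -/
noncomputable def hmap (hA : ∀ i, ∃ j, A i j = 1)
    (hVdisj : ∀ i j, i ≠ j → Disjoint (V i) (V j)) (n : ℕ) (x : X) : SigmaA A :=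
  if hx : x ∈ Lam f A V n then ⟨code f V n x, code_trans f A V hVdisj n hx⟩
  else defSigma A hA

theorem hmap_eq (hA : ∀ i, ∃ j, A i j = 1)
    (hVdisj : ∀ i j, i ≠ j → Disjoint (V i) (V j)) {n : ℕ} {x : X} (hx : x ∈ Lam f A V n) :
    (hmap f A V hA hVdisj n x).1 = code f V n x := by
  classical
  simp only [hmap]
  exact congrArg Subtype.val (dif_pos hx)

end CE

namespace CE2
open CE
variable {X : Type*} (f : ℕ → X → X) {N : ℕ} (A : Matrix (Fin N) (Fin N) ℕ)
  (V : Fin N → Set X)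

theorem chain_lift (hVne : ∀ i, (V i).Nonempty)
    (hexp : ∀ n : ℕ, ∀ i : Fin N, (⋃ j ∈ {j | A i j = 1}, V j) ⊆ f n '' V i) :
    ∀ (m n : ℕ) (s : ℕ → Fin N), (∀ k, A (s k) (s (k+1)) = 1) →
      ∃ x, ∀ k ≤ m, itr f n k x ∈ V (s k) := by
  intro m
  induction m with
  | zero =>
    intro n s _
    exact ⟨(hVne (s 0)).some, fun k hk => by
      interval_cases k; exact (hVne (s 0)).some_mem⟩
  | succ m ih =>
    intro n s hs
    obtain ⟨y, hy⟩ := ih (n+1) (fun k => s (k+1)) (fun k => hs (k+1))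
    have hy1 : y ∈ V (s 1) := hy 0 (Nat.zero_le m)
    have : y ∈ f n '' V (s 0) := hexp n (s 0) (mem_biUnion (hs 0) hy1)
    obtain ⟨x, hx0, hfx⟩ := this
    refine ⟨x, fun k hk => ?_⟩
    match k with
    | 0 => exact hx0
    | (k'+1) =>
      rw [← itr_shift, hfx]
      exact hy k' (by omega)

/-- the cylinder-type set of points with itinerary `s` from time `n` on -/
def CSet (n : ℕ) (s : ℕ → Fin N) : Set X := ⋂ k, itr f n k ⁻¹' V (s k)

theorem CSet_nonempty [TopologicalSpace X] [CompactSpace X]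
    (hf : ∀ n, Continuous (f n)) (hVne : ∀ i, (V i).Nonempty)
    (hVcl : ∀ i, IsClosed (V i))
    (hexp : ∀ n : ℕ, ∀ i : Fin N, (⋃ j ∈ {j | A i j = 1}, V j) ⊆ f n '' V i)
    (n : ℕ) (s : ℕ → Fin N) (hs : ∀ k, A (s k) (s (k+1)) = 1) :
    (CSet f V n s).Nonempty := by
  set K : ℕ → Set X := fun m => ⋂ k, ⋂ _ : k ≤ m, itr f n k ⁻¹' V (s k) with hK
  have hKcl : ∀ m, IsClosed (K m) := fun m =>
    isClosed_iInter fun k => isClosed_iInter fun _ =>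
      (hVcl (s k)).preimage (itr_cont f hf n k)
  have hKne : ∀ m, (K m).Nonempty := by
    intro m
    obtain ⟨x, hx⟩ := chain_lift f A V hVne hexp m n s hs
    exact ⟨x, mem_iInter.2 fun k => mem_iInter.2 fun hk => hx k hk⟩
  have hKmono : ∀ m, K (m+1) ⊆ K m := by
    intro m x hx
    exact mem_iInter.2 fun k => mem_iInter.2 fun hk =>
      mem_iInter.1 (mem_iInter.1 hx k) (by omega)
  have := IsCompact.nonempty_iInter_of_sequence_nonempty_isCompact_isClosed K hKmono hKne
    ((hKcl 0).isCompact) hKcl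
  obtain ⟨x, hx⟩ := this
  refine ⟨x, mem_iInter.2 fun k => ?_⟩
  exact mem_iInter.1 (mem_iInter.1 (mem_iInter.1 hx k) k) le_rfl

theorem CSet_subset_Lam (n : ℕ) (s : ℕ → Fin N) (hs : ∀ k, A (s k) (s (k+1)) = 1) :
    CSet f V n s ⊆ Lam f A V n := by
  intro x hx
  refine mem_iInter.2 fun k => ?_
  have h1 : itr f n k x ∈ V (s k) := mem_iInter.1 hx k
  have h2 : itr f n (k+1) x ∈ V (s (k+1)) := mem_iInter.1 hx (k+1)
  simp only [mem_preimage, Wset, mem_iUnion]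
  exact ⟨s k, s (k+1), hs k, h1, h2⟩

theorem Lam_nonempty [TopologicalSpace X] [CompactSpace X] [NeZero N]
    (hf : ∀ n, Continuous (f n)) (hVne : ∀ i, (V i).Nonempty)
    (hVcl : ∀ i, IsClosed (V i)) (hA : ∀ i, ∃ j, A i j = 1)
    (hexp : ∀ n : ℕ, ∀ i : Fin N, (⋃ j ∈ {j | A i j = 1}, V j) ⊆ f n '' V i)
    (n : ℕ) : (Lam f A V n).Nonempty :=
  ((CSet_nonempty f A V hf hVne hVcl hexp n _ (extSeq_spec A hA 0)).mono
    (CSet_subset_Lam f A V n _ (extSeq_spec A hA 0)))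

theorem Lam_image (hA : ∀ j, ∃ i, A i j = 1)
    (hexp : ∀ n : ℕ, ∀ i : Fin N, (⋃ j ∈ {j | A i j = 1}, V j) ⊆ f n '' V i)
    (n : ℕ) : f n '' Lam f A V n = Lam f A V (n+1) := by
  apply Set.eq_of_subset_of_subset
  · rintro - ⟨x, hx, rfl⟩
    refine mem_iInter.2 fun k => ?_
    rw [mem_preimage, itr_shift]
    have := mem_iInter.1 hx (k+1)
    rw [mem_preimage] at this
    convert this using 2
    omega
  · intro y hy
    have h0 := mem_iInter.1 hy 0
    simp only [mem_preimage, itr_zero, Wset, mem_iUnion] at h0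
    obtain ⟨j₀, j₁, hj01, hyj0, -⟩ := h0
    obtain ⟨i, hij0⟩ := hA j₀
    have : y ∈ f n '' V i := hexp n i (mem_biUnion hij0 hyj0)
    obtain ⟨x, hxi, hfx⟩ := this
    refine ⟨x, mem_iInter.2 fun k => ?_, hfx⟩
    match k with
    | 0 =>
      simp only [mem_preimage, itr_zero, Wset, mem_iUnion]
      refine ⟨i, j₀, hij0, hxi, ?_⟩
      rw [Set.mem_preimage]
      have hfx' : f (n+0) x = y := by simpa using hfx
      rw [hfx']; exact hyj0
    | (k'+1) =>
      rw [mem_preimage, ← itr_shift, hfx]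
      have := mem_iInter.1 hy k'
      rw [mem_preimage] at this
      convert this using 2
      omega

end CE2

namespace CE3
open CE CE2
variable {X : Type*} (f : ℕ → X → X) {N : ℕ} (A : Matrix (Fin N) (Fin N) ℕ)
  (V : Fin N → Set X)

theorem Lam_closed [TopologicalSpace X] (hf : ∀ n, Continuous (f n))
    (hVcl : ∀ i, IsClosed (V i)) (n : ℕ) : IsClosed (Lam f A V n) := by
  refine isClosed_iInter fun k => IsClosed.preimage (itr_cont f hf n k) ?_
  refine isClosed_iUnion_of_finite fun i => isClosed_iUnion_of_finite fun j =>
    isClosed_iUnion_of_finite fun _ => (hVcl i).inter ((hVcl j).preimage (hf _))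

theorem Lam_subsetV (n : ℕ) : Lam f A V n ⊆ ⋃ i, V i := by
  intro x hx
  obtain ⟨i, hi⟩ := exists_mem_V f A V n hx 0
  rw [itr_zero] at hi
  exact mem_iUnion.2 ⟨i, hi⟩

variable [NeZero N]

theorem hmap_surj [TopologicalSpace X] [CompactSpace X]
    (hf : ∀ n, Continuous (f n)) (hVne : ∀ i, (V i).Nonempty)
    (hVcl : ∀ i, IsClosed (V i)) (hA : ∀ i, ∃ j, A i j = 1)
    (hVdisj : ∀ i j, i ≠ j → Disjoint (V i) (V j))
    (hexp : ∀ n : ℕ, ∀ i : Fin N, (⋃ j ∈ {j | A i j = 1}, V j) ⊆ f n '' V i)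
    (n : ℕ) :
    Set.SurjOn (hmap f A V hA hVdisj n) (Lam f A V n) Set.univ := by
  intro α _
  obtain ⟨x, hx⟩ := CSet_nonempty f A V hf hVne hVcl hexp n α.1 α.2
  have hxL : x ∈ Lam f A V n := CSet_subset_Lam f A V n α.1 α.2 hx
  refine ⟨x, hxL, ?_⟩
  have h1 : (hmap f A V hA hVdisj n x).1 = α.1 := by
    rw [hmap_eq f A V hA hVdisj hxL]
    funext k
    exact code_unique f V hVdisj (mem_iInter.1 hx k)
  exact Subtype.ext h1

theorem hmap_semiconj [TopologicalSpace X] [CompactSpace X]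
    (hA : ∀ i, ∃ j, A i j = 1) (hA' : ∀ j, ∃ i, A i j = 1)
    (hVdisj : ∀ i j, i ≠ j → Disjoint (V i) (V j))
    (hexp : ∀ n : ℕ, ∀ i : Fin N, (⋃ j ∈ {j | A i j = 1}, V j) ⊆ f n '' V i)
    (n : ℕ) {x : X} (hx : x ∈ Lam f A V n) :
    hmap f A V hA hVdisj (n+1) (f n x) = shiftA (hmap f A V hA hVdisj n x) := by
  have hfx : f n x ∈ Lam f A V (n+1) := by
    rw [← Lam_image f A V hA' hexp n]; exact ⟨x, hx, rfl⟩
  refine Subtype.ext ?_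
  rw [hmap_eq f A V hA hVdisj hfx]
  funext k
  have h1 : itr f (n+1) k (f n x) ∈ V (code f V n x (k+1)) := by
    rw [itr_shift]; exact code_mem f A V n hx (k+1)
  rw [code_unique f V hVdisj h1]
  show _ = (shiftA (hmap f A V hA hVdisj n x)).1 k
  simp only [shiftA, hmap_eq f A V hA hVdisj hx]

end CE3

namespace CE4
open CE CE2 CE3

theorem rho_le {N : ℕ} {A : Matrix (Fin N) (Fin N) ℕ} (α β : SigmaA A) (m : ℕ)
    (h : ∀ k < m, α.1 k = β.1 k) : rho α β ≤ 2 * (1/2:ℝ)^m := by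
  classical
  set c : ℕ → ℝ := fun i => if α.1 i = β.1 i then 0 else (1 / 2 : ℝ) ^ i with hc
  have hle : ∀ i, c i ≤ (1/2:ℝ)^i := by
    intro i; by_cases hi : α.1 i = β.1 i <;> simp [hc, hi] <;> positivity
  have hnn : ∀ i, 0 ≤ c i := by
    intro i; by_cases hi : α.1 i = β.1 i <;> simp [hc, hi] <;> positivity
  have hg : Summable (fun i : ℕ => (1/2:ℝ)^i) :=
    summable_geometric_of_lt_one (by norm_num) (by norm_num)
  have hsc : Summable c := Summable.of_nonneg_of_le hnn hle hg
  have key : rho α β = ∑ i ∈ Finset.range m, c i + ∑' i, c (i + m) :=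
    (Summable.sum_add_tsum_nat_add m hsc).symm
  have h1 : ∑ i ∈ Finset.range m, c i = 0 := by
    refine Finset.sum_eq_zero fun i hi => ?_
    simp [hc, h i (Finset.mem_range.1 hi)]
  have h2 : ∑' i, c (i + m) ≤ ∑' i : ℕ, (1/2:ℝ)^(i+m) := by
    refine Summable.tsum_le_tsum (fun i => hle (i+m)) ((summable_nat_add_iff m).2 hsc) ?_
    exact (summable_nat_add_iff m).2 hg
  have h3 : ∑' i : ℕ, (1/2:ℝ)^(i+m) = 2 * (1/2:ℝ)^m := by
    have : ∀ i : ℕ, (1/2:ℝ)^(i+m) = (1/2:ℝ)^i * (1/2:ℝ)^m := fun i => pow_add _ i m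
    rw [tsum_congr this, tsum_mul_right, tsum_geometric_of_lt_one (by norm_num) (by norm_num)]
    norm_num [mul_comm]
  exact (le_of_eq key).trans (by rw [h1, zero_add]; exact h2.trans_eq h3)

variable {X : Type*} [UniformSpace X] [CompactSpace X] (f : ℕ → X → X)
  {N : ℕ} (A : Matrix (Fin N) (Fin N) ℕ) (V : Fin N → Set X)

theorem exists_sep_entourage (hVcl : ∀ i, IsClosed (V i))
    (hVdisj : ∀ i j, i ≠ j → Disjoint (V i) (V j)) :
    ∃ γ ∈ 𝓤 X, ∀ i j : Fin N, i ≠ j → ∀ x ∈ V i, ∀ y ∈ V j, (x, y) ∉ γ := by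
  have H : ∀ p : Fin N × Fin N, ∃ U ∈ 𝓤 X, p.1 ≠ p.2 →
      Disjoint (⋃ x ∈ V p.1, UniformSpace.ball x U) (⋃ x ∈ V p.2, UniformSpace.ball x U) := by
    intro p
    by_cases hp : p.1 = p.2
    · exact ⟨Set.univ, univ_mem, fun h => absurd hp h⟩
    · obtain ⟨U, hU, hd⟩ := Disjoint.exists_uniform_thickening
        ((hVcl p.1).isCompact) (hVcl p.2) (hVdisj _ _ hp)
      exact ⟨U, hU, fun _ => hd⟩
  choose U hU hd using H
  refine ⟨⋂ p, U p, (Filter.iInter_mem).2 hU, ?_⟩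
  intro i j hij x hx y hy hxy
  have hxy' : (x, y) ∈ U (i, j) := mem_iInter.1 hxy (i, j)
  have h1 : y ∈ ⋃ z ∈ V i, UniformSpace.ball z (U (i, j)) :=
    mem_biUnion hx hxy'
  have h2 : y ∈ ⋃ z ∈ V j, UniformSpace.ball z (U (i, j)) :=
    mem_biUnion hy (refl_mem_uniformity (hU (i, j)))
  exact (hd (i, j) hij).le_bot ⟨h1, h2⟩

variable [NeZero N]

theorem hmap_equicont
    (hVcl : ∀ i, IsClosed (V i)) (hA : ∀ i, ∃ j, A i j = 1)
    (hVdisj : ∀ i j, i ≠ j → Disjoint (V i) (V j))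
    (hequi : ∀ γ ∈ 𝓤 X, ∀ m : ℕ, ∃ η ∈ 𝓤 X,
      ∀ x ∈ ⋃ i, V i, ∀ y ∈ ⋃ i, V i, (x, y) ∈ η →
        ∀ i : ℕ, ∀ k < m, (itr f i k x, itr f i k y) ∈ γ) :
    ∀ ε : ℝ, 0 < ε → ∃ η ∈ 𝓤 X,
      ∀ n, ∀ x ∈ Lam f A V n, ∀ y ∈ Lam f A V n, (x, y) ∈ η →
        rho (hmap f A V hA hVdisj n x) (hmap f A V hA hVdisj n y) < ε := by
  intro ε hε
  obtain ⟨γ, hγ, hsep⟩ := exists_sep_entourage V hVcl hVdisj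
  obtain ⟨m, hm⟩ : ∃ m : ℕ, 2 * (1/2:ℝ)^m < ε := by
    obtain ⟨m, hm⟩ := exists_pow_lt_of_lt_one (div_pos hε (by norm_num : (0:ℝ) < 2))
      (by norm_num : (1/2:ℝ) < 1)
    exact ⟨m, by linarith [hm]⟩
  obtain ⟨η, hη, hηs⟩ := hequi γ hγ m
  refine ⟨η, hη, fun n x hx y hy hxy => ?_⟩
  have hcode : ∀ k < m, code f V n x k = code f V n y k := by
    intro k hk
    by_contra hne
    exact hsep _ _ hne _ (code_mem f A V n hx k) _ (code_mem f A V n hy k)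
      (hηs x (Lam_subsetV f A V n hx) y (Lam_subsetV f A V n hy) hxy n k hk)
  have : rho (hmap f A V hA hVdisj n x) (hmap f A V hA hVdisj n y) ≤ 2 * (1/2:ℝ)^m := by
    refine rho_le _ _ m fun k hk => ?_
    rw [hmap_eq f A V hA hVdisj hx, hmap_eq f A V hA hVdisj hy]
    exact hcode k hk
  exact this.trans_lt hm

end CE4

namespace CE5
open CE CE2 CE3
variable {N : ℕ} (A : Matrix (Fin N) (Fin N) ℕ)

/-- admissible words of length `n+1` ending in `j` -/
noncomputable def WFin (n : ℕ) (j : Fin N) : Finset (Fin (n+1) → Fin N) := by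
  classical
  exact Finset.univ.filter fun w =>
    (∀ k : Fin n, A (w k.castSucc) (w k.succ) = 1) ∧ w (Fin.last n) = j

/-- all admissible words of length `n+1` -/
noncomputable def allW (n : ℕ) : Finset (Fin (n+1) → Fin N) := by
  classical
  exact Finset.univ.filter fun w => ∀ k : Fin n, A (w k.castSucc) (w k.succ) = 1

open scoped Classical in
theorem mem_WFin {n : ℕ} {j : Fin N} {w : Fin (n+1) → Fin N} :
    w ∈ WFin A n j ↔ (∀ k : Fin n, A (w k.castSucc) (w k.succ) = 1) ∧ w (Fin.last n) = j := by
  simp [WFin]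

open scoped Classical in
theorem mem_allW {n : ℕ} {w : Fin (n+1) → Fin N} :
    w ∈ allW A n ↔ ∀ k : Fin n, A (w k.castSucc) (w k.succ) = 1 := by
  simp [allW]

theorem chain_snoc {n : ℕ} {j : Fin N} (w : Fin (n+1) → Fin N)
    (hw : ∀ k : Fin n, A (w k.castSucc) (w k.succ) = 1) (hj : A (w (Fin.last n)) j = 1) :
    ∀ k : Fin (n+1), A ((Fin.snoc w j : Fin (n+2) → Fin N) k.castSucc)
      ((Fin.snoc w j : Fin (n+2) → Fin N) k.succ) = 1 := by
  intro k
  induction k using Fin.lastCases with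
  | last =>
    rw [Fin.succ_last, Fin.snoc_last, Fin.snoc_castSucc]
    exact hj
  | cast i =>
    rw [Fin.succ_castSucc, Fin.snoc_castSucc, Fin.snoc_castSucc]
    exact hw i

theorem chain_init {n : ℕ} (w : Fin (n+2) → Fin N)
    (hw : ∀ k : Fin (n+1), A (w k.castSucc) (w k.succ) = 1) :
    ∀ k : Fin n, A (Fin.init w k.castSucc) (Fin.init w k.succ) = 1 := by
  intro k
  show A (w k.castSucc.castSucc) (w k.succ.castSucc) = 1
  rw [← Fin.succ_castSucc]
  exact hw k.castSucc

theorem card_WFin_succ (h01 : ∀ i j, A i j = 0 ∨ A i j = 1) (n : ℕ) (j : Fin N) :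
    (WFin A (n+1) j).card = ∑ k, (WFin A n k).card * A k j := by
  classical
  set S : Finset (Fin (n+1) → Fin N) := Finset.univ.filter
    (fun w => (∀ k : Fin n, A (w k.castSucc) (w k.succ) = 1) ∧ A (w (Fin.last n)) j = 1)
    with hS
  have hmemS : ∀ w, w ∈ S ↔
      (∀ k : Fin n, A (w k.castSucc) (w k.succ) = 1) ∧ A (w (Fin.last n)) j = 1 := by
    intro w; simp [hS]
  have himg : WFin A (n+1) j = S.image (fun w => Fin.snoc w j) := by
    ext w
    rw [mem_WFin, Finset.mem_image]
    constructor
    · rintro ⟨hc, hl⟩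
      refine ⟨Fin.init w, (hmemS _).2 ⟨chain_init A w hc, ?_⟩, ?_⟩
      · show A (w (Fin.last n).castSucc) j = 1
        have := hc (Fin.last n)
        rwa [Fin.succ_last, hl] at this
      · rw [← hl]
        exact Fin.snoc_init_self w
    · rintro ⟨v, hv, rfl⟩
      obtain ⟨hvc, hvl⟩ := (hmemS v).1 hv
      exact ⟨chain_snoc A v hvc hvl, by simp⟩
  have hinj : Function.Injective
      (fun w : Fin (n+1) → Fin N => (Fin.snoc w j : Fin (n+2) → Fin N)) := by
    intro v v' hvv
    have h2 : Fin.init (Fin.snoc v j : Fin (n+2) → Fin N)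
        = Fin.init (Fin.snoc v' j : Fin (n+2) → Fin N) := congrArg Fin.init hvv
    rwa [Fin.init_snoc, Fin.init_snoc] at h2
  rw [himg, Finset.card_image_of_injective _ hinj]
  rw [Finset.card_eq_sum_card_fiberwise
    (f := fun w => w (Fin.last n)) (t := Finset.univ) (fun x _ => Finset.mem_univ _)]
  refine Finset.sum_congr rfl fun k _ => ?_
  rcases h01 k j with h0 | h1
  · rw [h0, mul_zero, Finset.card_eq_zero]
    ext w
    simp only [Finset.mem_filter, Finset.notMem_empty, iff_false]
    rintro ⟨hw, hwk⟩
    obtain ⟨-, hl⟩ := (hmemS w).1 hw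
    rw [hwk, h0] at hl
    exact absurd hl (by norm_num)
  · rw [h1, mul_one]
    congr 1
    ext w
    rw [Finset.mem_filter, hmemS, mem_WFin]
    constructor
    · rintro ⟨⟨hc, -⟩, hk⟩; exact ⟨hc, hk⟩
    · rintro ⟨hc, hk⟩; exact ⟨⟨hc, by rw [hk, h1]⟩, hk⟩

theorem card_WFin (h01 : ∀ i j, A i j = 0 ∨ A i j = 1) :
    ∀ (n : ℕ) (j : Fin N), (WFin A n j).card = ∑ i, (A ^ n) i j := by
  intro n
  induction n with
  | zero =>
    intro j
    have : WFin A 0 j = {fun _ => j} := by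
      ext w
      rw [mem_WFin, Finset.mem_singleton]
      constructor
      · rintro ⟨-, hl⟩
        funext k
        have hk : k = Fin.last 0 := Fin.ext (by omega)
        rw [hk, hl]
      · rintro rfl
        exact ⟨fun k => k.elim0, rfl⟩
    rw [this, Finset.card_singleton]
    simp [Matrix.one_apply]
  | succ n ih =>
    intro j
    rw [card_WFin_succ A h01 n j]
    have : ∀ i, (A ^ (n+1)) i j = ∑ k, (A ^ n) i k * A k j := by
      intro i; rw [pow_succ, Matrix.mul_apply]
    rw [Finset.sum_congr rfl fun i _ => this i, Finset.sum_comm]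
    refine Finset.sum_congr rfl fun k _ => ?_
    rw [ih k, Finset.sum_mul]

theorem card_allW (h01 : ∀ i j, A i j = 0 ∨ A i j = 1) (n : ℕ) :
    (allW A n).card = ∑ i, ∑ j, (A ^ n) i j := by
  classical
  have hfib : ∀ j, (allW A n).filter (fun w => w (Fin.last n) = j) = WFin A n j := by
    intro j; ext w
    rw [Finset.mem_filter, mem_allW, mem_WFin]
  calc (allW A n).card
      = ∑ j, ((allW A n).filter (fun w => w (Fin.last n) = j)).card :=
        Finset.card_eq_sum_card_fiberwise (fun x _ => Finset.mem_univ _)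
    _ = ∑ j, ∑ i, (A ^ n) i j := by
        refine Finset.sum_congr rfl fun j _ => ?_
        rw [hfib j, card_WFin A h01 n j]
    _ = ∑ i, ∑ j, (A ^ n) i j := Finset.sum_comm

end CE5

namespace CE6
open CE CE2 CE3 CE5

variable {X : Type*} (f : ℕ → X → X) {N : ℕ} (A : Matrix (Fin N) (Fin N) ℕ)
  (V : Fin N → Set X) [NeZero N]

/-- every finite admissible word is realized as the code-prefix of a point of `Λ_0`. -/
theorem exists_word_point [TopologicalSpace X] [CompactSpace X]
    (hf : ∀ n, Continuous (f n)) (hVne : ∀ i, (V i).Nonempty)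
    (hVcl : ∀ i, IsClosed (V i)) (hA : ∀ i, ∃ j, A i j = 1)
    (hVdisj : ∀ i j, i ≠ j → Disjoint (V i) (V j))
    (hexp : ∀ n : ℕ, ∀ i : Fin N, (⋃ j ∈ {j | A i j = 1}, V j) ⊆ f n '' V i)
    (n : ℕ) (w : Fin (n+1) → Fin N)
    (hw : ∀ k : Fin n, A (w k.castSucc) (w k.succ) = 1) :
    ∃ x ∈ Lam f A V 0, ∀ k : Fin (n+1), code f V 0 x (k : ℕ) = w k := by
  classical
  set s : ℕ → Fin N := fun k =>
    if h : k < n + 1 then w ⟨k, h⟩ else extSeq A hA (w (Fin.last n)) (k - n) with hs_def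
  have hsw : ∀ k : Fin (n+1), s (k : ℕ) = w k := by
    intro k
    simp only [hs_def, dif_pos k.isLt]
  have hsn : s n = w (Fin.last n) := by
    have : (Fin.last n) = (⟨n, n.lt_succ_self⟩ : Fin (n+1)) := rfl
    simp only [hs_def, dif_pos n.lt_succ_self, this]
  have hs : ∀ k, A (s k) (s (k+1)) = 1 := by
    intro k
    rcases lt_trichotomy k n with hk | hk | hk
    · have h1 : k < n + 1 := by omega
      have h2 : k + 1 < n + 1 := by omega
      simp only [hs_def, dif_pos h1, dif_pos h2]
      exact hw ⟨k, hk⟩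
    · subst hk
      have h2 : ¬ (k + 1 < k + 1) := by omega
      have h3 : k + 1 - k = 1 := by omega
      simp only [hs_def, dif_pos k.lt_succ_self, dif_neg h2, h3]
      have h5 : extSeq A hA (w (Fin.last k)) 1 = nxt A hA (w (Fin.last k)) := rfl
      rw [h5]
      have h4 : w ⟨k, k.lt_succ_self⟩ = w (Fin.last k) := rfl
      rw [h4]
      exact nxt_spec A hA _
    · have h1 : ¬ (k < n + 1) := by omega
      have h2 : ¬ (k + 1 < n + 1) := by omega
      have h3 : k + 1 - n = (k - n) + 1 := by omega
      simp only [hs_def, dif_neg h1, dif_neg h2, h3]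
      exact extSeq_spec A hA _ _
  obtain ⟨x, hx⟩ := CSet_nonempty f A V hf hVne hVcl hexp 0 s hs
  refine ⟨x, CSet_subset_Lam f A V 0 s hs hx, fun k => ?_⟩
  rw [code_unique f V hVdisj (mem_iInter.1 hx (k : ℕ))]
  exact hsw k

theorem exists_sep_finset [UniformSpace X] [CompactSpace X]
    (hf : ∀ n, Continuous (f n)) (hVne : ∀ i, (V i).Nonempty)
    (hVcl : ∀ i, IsClosed (V i)) (hA : ∀ i, ∃ j, A i j = 1)
    (hVdisj : ∀ i j, i ≠ j → Disjoint (V i) (V j))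
    (hexp : ∀ n : ℕ, ∀ i : Fin N, (⋃ j ∈ {j | A i j = 1}, V j) ⊆ f n '' V i)
    {γ : Set (X × X)} (hsep : ∀ i j : Fin N, i ≠ j → ∀ x ∈ V i, ∀ y ∈ V j, (x, y) ∉ γ)
    (n : ℕ) :
    ∃ E : Finset X, ↑E ⊆ Lam f A V 0 ∧ IsSep f (n+1) γ ↑E ∧
      E.card = (allW A n).card := by
  classical
  have hpt : ∀ w : {w // w ∈ allW A n},
      ∃ x, x ∈ Lam f A V 0 ∧ ∀ k : Fin (n+1), code f V 0 x (k : ℕ) = w.1 k := by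
    rintro ⟨w, hw⟩
    obtain ⟨x, hx1, hx2⟩ := exists_word_point f A V hf hVne hVcl hA hVdisj hexp n w
      ((mem_allW A).1 hw)
    exact ⟨x, hx1, hx2⟩
  choose φ hφ1 hφ2 using hpt
  have hrec : ∀ w w' : {w // w ∈ allW A n}, φ w = φ w' → w = w' := by
    intro w w' he
    refine Subtype.ext (funext fun k => ?_)
    rw [← hφ2 w k, ← hφ2 w' k, he]
  refine ⟨(allW A n).attach.image φ, ?_, ?_, ?_⟩
  · intro x hx
    simp only [Finset.coe_image, Set.mem_image, Finset.mem_coe, Finset.mem_attach,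
      true_and] at hx
    obtain ⟨w, -, rfl⟩ := hx
    exact hφ1 w
  · intro x hx y hy hxy
    simp only [Finset.coe_image, Set.mem_image, Finset.mem_coe, Finset.mem_attach,
      true_and] at hx hy
    obtain ⟨w, -, rfl⟩ := hx
    obtain ⟨w', -, rfl⟩ := hy
    have hww : w ≠ w' := fun h => hxy (by rw [h])
    have : ∃ k : Fin (n+1), w.1 k ≠ w'.1 k := by
      by_contra hcon
      push_neg at hcon
      exact hww (Subtype.ext (funext hcon))
    obtain ⟨k, hk⟩ := this
    refine ⟨(k : ℕ), k.isLt, ?_⟩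
    have hxk : itr f 0 (k : ℕ) (φ w) ∈ V (w.1 k) := by
      rw [← hφ2 w k]
      exact code_mem f A V 0 (hφ1 w) (k : ℕ)
    have hyk : itr f 0 (k : ℕ) (φ w') ∈ V (w'.1 k) := by
      rw [← hφ2 w' k]
      exact code_mem f A V 0 (hφ1 w') (k : ℕ)
    exact hsep _ _ hk _ hxk _ hyk
  · rw [Finset.card_image_of_injective _ hrec, Finset.card_attach]

end CE6

namespace CE7
open CE UniformSpace

variable {X : Type*} [UniformSpace X] [CompactSpace X] (f : ℕ → X → X)

theorem sep_bddAbove {γ : Set (X × X)} (hγ : γ ∈ 𝓤 X) (Λ : Set X) (n : ℕ) :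
    BddAbove {m | ∃ E : Finset X, ↑E ⊆ Λ ∧ IsSep f n γ ↑E ∧ E.card = m} := by
  classical
  obtain ⟨η, hη, hηo, hηs, hηc⟩ := comp_open_symm_mem_uniformity_sets hγ
  have hcov : (Set.univ : Set X) ⊆ ⋃ c : X, ball c η := by
    intro x _
    exact mem_iUnion.2 ⟨x, refl_mem_uniformity hη⟩
  obtain ⟨t, ht⟩ := isCompact_univ.elim_finite_subcover (fun c : X => ball c η)
    (fun c => isOpen_ball c hηo) hcov
  refine ⟨t.card ^ n, ?_⟩
  rintro m ⟨E, -, hsep, rfl⟩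
  have hchoice : ∀ x : X, ∀ j : Fin n, ∃ c : {c // c ∈ t}, itr f 0 (j : ℕ) x ∈ ball c.1 η := by
    intro x j
    have := ht (Set.mem_univ (itr f 0 (j : ℕ) x))
    simp only [Set.mem_iUnion] at this
    obtain ⟨c, hc, hmem⟩ := this
    exact ⟨⟨c, hc⟩, hmem⟩
  choose g hg using hchoice
  have hinj : Function.Injective (fun x : {x // x ∈ E} => g x.1) := by
    intro x y hxy
    by_contra hne
    have hne' : x.1 ≠ y.1 := fun h => hne (Subtype.ext h)
    obtain ⟨j, hj, hsep'⟩ := hsep x.1 x.2 y.1 y.2 hne'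
    refine hsep' (hηc ?_)
    have h1 := hg x.1 ⟨j, hj⟩
    have h2 := hg y.1 ⟨j, hj⟩
    have hxy' : g x.1 = g y.1 := hxy
    rw [hxy'] at h1
    exact ⟨(g y.1 ⟨j, hj⟩).1, hηs.symm _ _ h1, h2⟩
  calc E.card = Fintype.card {x // x ∈ E} := (Fintype.card_coe E).symm
    _ ≤ Fintype.card (Fin n → {c // c ∈ t}) := Fintype.card_le_of_injective _ hinj
    _ = t.card ^ n := by rw [Fintype.card_fun]; simp

theorem sepCard_ge {γ : Set (X × X)} (hγ : γ ∈ 𝓤 X) {Λ : Set X} {n : ℕ} {E : Finset X}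
    (hE : ↑E ⊆ Λ) (hsep : IsSep f n γ ↑E) : E.card ≤ sepCard f Λ n γ :=
  le_csSup (sep_bddAbove f hγ Λ n) ⟨E, hE, hsep, rfl⟩

end CE7

namespace CE8
open CE CE2 CE3 CE5 CE6 CE7

variable {N : ℕ} (A : Matrix (Fin N) (Fin N) ℕ)

/-- total mass of `A ^ n` -/
def S (n : ℕ) : ℕ := ∑ i, ∑ j, (A ^ n) i j

theorem row_pos (hA : ∀ i, ∃ j, A i j = 1) : ∀ n i, ∃ j, 1 ≤ (A ^ n) i j := by
  intro n
  induction n with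
  | zero => intro i; exact ⟨i, by simp⟩
  | succ n ih =>
    intro i
    obtain ⟨k, hk⟩ := ih i
    obtain ⟨j, hj⟩ := hA k
    refine ⟨j, ?_⟩
    rw [pow_succ, Matrix.mul_apply]
    calc 1 ≤ (A ^ n) i k * A k j := by rw [hj, mul_one]; exact hk
      _ ≤ ∑ l, (A ^ n) i l * A l j :=
        Finset.single_le_sum (f := fun l => (A ^ n) i l * A l j)
          (fun l _ => Nat.zero_le _) (Finset.mem_univ k)

theorem S_ge_one (hN : 1 ≤ N) (hA : ∀ i, ∃ j, A i j = 1) (n : ℕ) : 1 ≤ S A n := by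
  have i0 : Fin N := ⟨0, by omega⟩
  obtain ⟨j, hj⟩ := row_pos A hA n i0
  calc 1 ≤ (A ^ n) i0 j := hj
    _ ≤ ∑ j', (A ^ n) i0 j' :=
      Finset.single_le_sum (fun l _ => Nat.zero_le _) (Finset.mem_univ j)
    _ ≤ S A n :=
      Finset.single_le_sum (f := fun i => ∑ j', (A ^ n) i j') (fun l _ => Nat.zero_le _)
        (Finset.mem_univ i0)

theorem S_submul (m k : ℕ) : S A (m + k) ≤ S A m * S A k := by
  have h1 : S A (m + k) = ∑ l, (∑ i, (A ^ m) i l) * (∑ j, (A ^ k) l j) := by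
    unfold S
    rw [pow_add]
    calc ∑ i, ∑ j, (A ^ m * A ^ k) i j
        = ∑ i, ∑ j, ∑ l, (A ^ m) i l * (A ^ k) l j := by
          refine Finset.sum_congr rfl fun i _ => Finset.sum_congr rfl fun j _ => ?_
          rw [Matrix.mul_apply]
      _ = ∑ i, ∑ l, ∑ j, (A ^ m) i l * (A ^ k) l j := by
          refine Finset.sum_congr rfl fun i _ => Finset.sum_comm
      _ = ∑ l, ∑ i, ∑ j, (A ^ m) i l * (A ^ k) l j := Finset.sum_comm
      _ = ∑ l, (∑ i, (A ^ m) i l) * (∑ j, (A ^ k) l j) := by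
          refine Finset.sum_congr rfl fun l _ => ?_
          rw [Finset.sum_mul]
          refine Finset.sum_congr rfl fun i _ => ?_
          rw [Finset.mul_sum]
  rw [h1]
  have h2 : S A m = ∑ l, ∑ i, (A ^ m) i l := Finset.sum_comm
  rw [h2, Finset.sum_mul]
  refine Finset.sum_le_sum fun l _ => ?_
  refine Nat.mul_le_mul_left _ ?_
  exact Finset.single_le_sum (f := fun l' => ∑ j, (A ^ k) l' j) (fun l' _ => Nat.zero_le _)
    (Finset.mem_univ l)

/-- the log-mass sequence -/
noncomputable def u (n : ℕ) : ℝ := Real.log (S A n)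

theorem subadd (hN : 1 ≤ N) (hA : ∀ i, ∃ j, A i j = 1) : Subadditive (u A) := by
  intro m k
  unfold u
  have hm : (1 : ℝ) ≤ (S A m : ℝ) := by exact_mod_cast S_ge_one A hN hA m
  have hk : (1 : ℝ) ≤ (S A k : ℝ) := by exact_mod_cast S_ge_one A hN hA k
  have hmk : (1 : ℝ) ≤ (S A (m + k) : ℝ) := by exact_mod_cast S_ge_one A hN hA (m + k)
  calc Real.log (S A (m + k)) ≤ Real.log ((S A m : ℝ) * (S A k : ℝ)) := by
        refine Real.log_le_log (by linarith) ?_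
        rw [← Nat.cast_mul]
        exact_mod_cast S_submul A m k
    _ = Real.log (S A m) + Real.log (S A k) :=
        Real.log_mul (by linarith) (by linarith)

theorem u_nonneg (hN : 1 ≤ N) (hA : ∀ i, ∃ j, A i j = 1) (n : ℕ) : 0 ≤ u A n :=
  Real.log_nonneg (by exact_mod_cast S_ge_one A hN hA n)

theorem u_bdd (hN : 1 ≤ N) (hA : ∀ i, ∃ j, A i j = 1) :
    BddBelow (Set.range fun n => u A n / n) := by
  refine ⟨0, ?_⟩
  rintro x ⟨n, rfl⟩
  exact div_nonneg (u_nonneg A hN hA n) (Nat.cast_nonneg n)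

theorem tendsto_u (hN : 1 ≤ N) (hA : ∀ i, ∃ j, A i j = 1) :
    Filter.Tendsto (fun n => u A n / n) Filter.atTop (nhds ((subadd A hN hA).lim)) :=
  (subadd A hN hA).tendsto_lim (u_bdd A hN hA)

theorem log_lamA (hN : 1 ≤ N) (hA : ∀ i, ∃ j, A i j = 1) :
    Real.log (lamA A) = (subadd A hN hA).lim := by
  have h1 : Filter.Tendsto (fun n : ℕ => ((S A n : ℝ)) ^ ((n : ℝ)⁻¹)) Filter.atTop
      (nhds (Real.exp ((subadd A hN hA).lim))) := by
    have h2 : Filter.Tendsto (fun n : ℕ => Real.exp (u A n / n)) Filter.atTop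
        (nhds (Real.exp ((subadd A hN hA).lim))) :=
      (Real.continuous_exp.tendsto _).comp (tendsto_u A hN hA)
    refine h2.congr' ?_
    filter_upwards [Filter.eventually_ge_atTop 1] with n hn
    have hpos : (0 : ℝ) < (S A n : ℝ) := by
      have := S_ge_one A hN hA n
      exact_mod_cast Nat.lt_of_lt_of_le Nat.zero_lt_one this
    rw [Real.rpow_def_of_pos hpos, u, div_eq_mul_inv]
  have h3 : lamA A = Real.exp ((subadd A hN hA).lim) := by
    rw [lamA]
    exact h1.limsup_eq
  rw [h3, Real.log_exp]

end CE8

/-- For a strictly `A`-coupled-expanding system (with the `V_i` closed and mutually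
disjoint) that is equi-continuous on `⋃ V_i`, there are compact sets `Λ_n ⊆ ⋃ V_i` with
`f_n(Λ_n) = Λ_{n+1}` and surjective maps `h_n : Λ_n → Σ_N^+(A)` forming an equi-continuous
semiconjugacy to the shift `σ_A`; consequently `h(f_{0,∞}, Λ_0) ≥ log λ(A)`. -/
theorem coupled_expanding_lower_bound {X : Type*} [UniformSpace X] [CompactSpace X]
    [T2Space X]
    (f : ℕ → X → X) (hf : ∀ n, Continuous (f n))
    (N : ℕ) (hN : 2 ≤ N) (A : Matrix (Fin N) (Fin N) ℕ) (hA : IsTransition A)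
    (V : Fin N → Set X) (hVne : ∀ i, (V i).Nonempty) (hVcl : ∀ i, IsClosed (V i))
    (hVdisj : ∀ i j, i ≠ j → Disjoint (V i) (V j))
    (hexp : ∀ n : ℕ, ∀ i : Fin N, (⋃ j ∈ {j | A i j = 1}, V j) ⊆ f n '' V i)
    (hequi : ∀ γ ∈ 𝓤 X, ∀ m : ℕ, ∃ η ∈ 𝓤 X,
      ∀ x ∈ ⋃ i, V i, ∀ y ∈ ⋃ i, V i, (x, y) ∈ η →
        ∀ i : ℕ, ∀ k < m, (itr f i k x, itr f i k y) ∈ γ) :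
    ∃ Λ : ℕ → Set X, ∃ h : ℕ → X → SigmaA A,
      (∀ n, (Λ n).Nonempty) ∧ (∀ n, IsCompact (Λ n)) ∧ (∀ n, Λ n ⊆ ⋃ i, V i) ∧
      (∀ n, f n '' Λ n = Λ (n + 1)) ∧
      (∀ n, Set.SurjOn (h n) (Λ n) Set.univ) ∧
      (∀ n, ∀ x ∈ Λ n, h (n + 1) (f n x) = shiftA (h n x)) ∧
      (∀ ε : ℝ, 0 < ε → ∃ η ∈ 𝓤 X,
        ∀ n, ∀ x ∈ Λ n, ∀ y ∈ Λ n, (x, y) ∈ η → rho (h n x) (h n y) < ε) ∧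
      ((Real.log (lamA A) : EReal) ≤ entropy f (Λ 0)) := by
  classical
  haveI : NeZero N := ⟨by omega⟩
  obtain ⟨h01, hrow, hcol⟩ := hA
  refine ⟨CE.Lam f A V, CE.hmap f A V hrow hVdisj, ?_, ?_, ?_, ?_, ?_, ?_, ?_, ?_⟩
  · exact fun n => CE2.Lam_nonempty f A V hf hVne hVcl hrow hexp n
  · exact fun n => (CE3.Lam_closed f A V hf hVcl n).isCompact
  · exact fun n => CE3.Lam_subsetV f A V n
  · exact fun n => CE2.Lam_image f A V hcol hexp n
  · exact fun n => CE3.hmap_surj f A V hf hVne hVcl hrow hVdisj hexp n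
  · exact fun n x hx => CE3.hmap_semiconj f A V hrow hcol hVdisj hexp n hx
  · exact CE4.hmap_equicont f A V hVcl hrow hVdisj hequi
  · -- the entropy bound
    obtain ⟨γ, hγ, hsep⟩ := CE4.exists_sep_entourage V hVcl hVdisj
    have hN1 : 1 ≤ N := by omega
    set ℓ := (CE8.subadd A hN1 hrow).lim with hℓ
    have hsc : ∀ n : ℕ, CE8.S A n ≤ sepCard f (CE.Lam f A V 0) (n+1) γ := by
      intro n
      obtain ⟨E, hE1, hE2, hE3⟩ :=
        CE6.exists_sep_finset f A V hf hVne hVcl hrow hVdisj hexp hsep n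
      have hle := CE7.sepCard_ge f hγ hE1 hE2
      rwa [hE3, CE5.card_allW A h01 n] at hle
    set c : ℕ → ℝ := fun n => CE8.u A (n-1) / n with hc
    have hcb : ∀ᶠ n in atTop, ((c n : ℝ) : EReal) ≤
        ((Real.log (sepCard f (CE.Lam f A V 0) n γ) / n : ℝ) : EReal) := by
      filter_upwards [eventually_ge_atTop 1] with n hn
      rw [EReal.coe_le_coe_iff]
      have h1 : (0:ℝ) < (CE8.S A (n-1) : ℝ) := by
        have := CE8.S_ge_one A hN1 hrow (n-1)
        exact_mod_cast Nat.lt_of_lt_of_le Nat.zero_lt_one this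
      have h2 : (CE8.S A (n-1) : ℝ) ≤ (sepCard f (CE.Lam f A V 0) n γ : ℝ) := by
        have := hsc (n-1)
        rw [show n - 1 + 1 = n from by omega] at this
        exact_mod_cast this
      have h3 : Real.log (CE8.S A (n-1)) ≤ Real.log (sepCard f (CE.Lam f A V 0) n γ) :=
        Real.log_le_log h1 h2
      have h4 : (0:ℝ) < n := by exact_mod_cast hn
      exact div_le_div_of_nonneg_right h3 h4.le |>.trans_eq rfl
    have hct : Tendsto c atTop (nhds ℓ) := by
      have t1 : Tendsto (fun n : ℕ => CE8.u A (n-1) / ((n-1 : ℕ) : ℝ)) atTop (nhds ℓ) :=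
        (CE8.tendsto_u A hN1 hrow).comp (tendsto_sub_atTop_nat 1)
      have t2 : Tendsto (fun n : ℕ => ((n-1 : ℕ) : ℝ) / (n : ℝ)) atTop (nhds 1) := by
        have base : Tendsto (fun n : ℕ => 1 - 1/(n:ℝ)) atTop (nhds (1 - 0)) :=
          tendsto_const_nhds.sub tendsto_one_div_atTop_nhds_zero_nat
        rw [sub_zero] at base
        refine base.congr' ?_
        filter_upwards [eventually_ge_atTop 1] with n hn
        have hn0 : (n:ℝ) ≠ 0 := Nat.cast_ne_zero.2 (by omega)
        rw [Nat.cast_sub hn]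
        field_simp
        norm_num
      have := t1.mul t2
      rw [mul_one] at this
      refine this.congr' ?_
      filter_upwards [eventually_ge_atTop 2] with n hn
      have hb : ((n-1 : ℕ) : ℝ) ≠ 0 := by
        have : 1 ≤ n - 1 := by omega
        have : (1:ℝ) ≤ ((n-1:ℕ):ℝ) := by exact_mod_cast this
        linarith
      have hn0 : (n:ℝ) ≠ 0 := by
        have : (2:ℝ) ≤ (n:ℝ) := by exact_mod_cast hn
        linarith
      show CE8.u A (n-1) / ((n-1:ℕ):ℝ) * (((n-1:ℕ):ℝ) / (n:ℝ)) = c n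
      show _ = CE8.u A (n-1) / (n:ℝ)
      rw [div_mul_div_comm, mul_comm (CE8.u A (n-1)) (((n-1:ℕ):ℝ)),
        mul_div_mul_left _ _ hb]
    have hl : (ℓ : EReal) = atTop.limsup (fun n => ((c n : ℝ) : EReal)) :=
      (Tendsto.limsup_eq ((EReal.tendsto_coe).2 hct)).symm
    have hlog : Real.log (lamA A) = ℓ := CE8.log_lamA A hN1 hrow
    rw [hlog]
    have step1 : (ℓ : EReal) ≤ atTop.limsup
        (fun n : ℕ => ((Real.log (sepCard f (CE.Lam f A V 0) n γ) / n : ℝ) : EReal)) := by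
      rw [hl]
      exact limsup_le_limsup hcb
    refine step1.trans ?_
    have hfin : (fun γ' => atTop.limsup fun n : ℕ =>
        ((Real.log (sepCard f (CE.Lam f A V 0) n γ') / n : ℝ) : EReal)) γ ≤
        entropy f (CE.Lam f A V 0) := by
      rw [entropy]
      exact le_biSup (fun γ' => atTop.limsup fun n : ℕ =>
        ((Real.log (sepCard f (CE.Lam f A V 0) n γ') / n : ℝ) : EReal)) hγ
    exact hfin
end

section
/- Let X be a compact Hausdorff uniform space, f_{0,∞} a sequence of continuous self-maps of X, A = (a_{ij}) an N×N transition matrix, and V₁,…,V_N nonempty closed subsets of X. Assume (i) f_n(V_i) ⊇ ⋃_{j : a_{ij}=1} V_j for all i, n, and (ii) for every α ∈ Σ_N^+(A) and every symmetric open entourage γ there exists M ≥ 1 such that for all m ≥ M and all n ≥ 0, V_α^{m,n} × V_α^{m,n} ⊂ γ. Then each intersection ⋂_{m≥0} V_α^{m,n} is a single point x_n(α); the sets Λ_n = {x_n(α) : α ∈ Σ_N^+(A)} are nonempty compact with f_n(Λ_n) = Λ_{n+1}; the maps π_n : Σ_N^+(A) → Λ_n, π_n(α) = x_n(α), are surjective,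 equi-continuous, and satisfy f_n ∘ π_n = π_{n+1} ∘ σ_A. Consequently h(f_{0,∞}, Λ_0) ≤ log λ(A). -/
open Filter Set
open scoped Uniformity

/-- `V_α^{m,n} = ⋂_{k=0}^m (f_n^k)⁻¹(V_{α_k})`, the set of points whose itinerary along
the sets `V_i` under `f_{n,∞}` follows `α` for `m+1` steps. -/
def itinSet {X : Type*} {N : ℕ} {A : Matrix (Fin N) (Fin N) ℕ}
    (f : ℕ → X → X) (V : Fin N → Set X) (α : SigmaA A) (m n : ℕ) : Set X :=
  ⋂ k ∈ Finset.range (m + 1), itr f n k ⁻¹' V (α.1 k)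


/-! ### Auxiliary lemmas -/

section Aux
variable {X : Type*} {N : ℕ} {A : Matrix (Fin N) (Fin N) ℕ}

lemma itr_succ_left (f : ℕ → X → X) (n : ℕ) : ∀ (k : ℕ) (x : X),
    itr f n (k + 1) x = itr f (n + 1) k (f n x)
  | 0, x => rfl
  | k + 1, x => by
    show f (n + (k+1)) (itr f n (k+1) x) = f (n + 1 + k) (itr f (n+1) k (f n x))
    rw [itr_succ_left f n k x]; ring_nf

lemma mem_itinSet {f : ℕ → X → X} {V : Fin N → Set X} {α : SigmaA A} {m n : ℕ} {x : X} :
    x ∈ itinSet f V α m n ↔ ∀ k ≤ m, itr f n k x ∈ V (α.1 k) := by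
  simp [itinSet, Nat.lt_succ_iff]

lemma itinSet_succ (f : ℕ → X → X) (V : Fin N → Set X) (α : SigmaA A) (m n : ℕ) :
    itinSet f V α (m + 1) n = V (α.1 0) ∩ f n ⁻¹' itinSet f V (shiftA α) m (n + 1) := by
  ext x
  simp only [mem_itinSet, Set.mem_inter_iff, Set.mem_preimage]
  constructor
  · intro h
    refine ⟨h 0 (Nat.zero_le _), fun k hk => ?_⟩
    rw [← itr_succ_left]
    exact h (k + 1) (by omega)
  · rintro ⟨h0, h⟩ k hk
    cases k with
    | zero => exact h0
    | succ k => rw [itr_succ_left]; exact h k (by omega)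

lemma itinSet_anti (f : ℕ → X → X) (V : Fin N → Set X) (α : SigmaA A) {m m' : ℕ}
    (h : m ≤ m') (n : ℕ) : itinSet f V α m' n ⊆ itinSet f V α m n := by
  intro x hx
  rw [mem_itinSet] at hx ⊢
  exact fun k hk => hx k (hk.trans h)

lemma itinSet_congr {f : ℕ → X → X} {V : Fin N → Set X} {α β : SigmaA A} {m : ℕ}
    (h : ∀ k ≤ m, α.1 k = β.1 k) (n : ℕ) : itinSet f V α m n = itinSet f V β m n := by
  ext x; rw [mem_itinSet, mem_itinSet]
  exact ⟨fun hx k hk => (h k hk) ▸ hx k hk, fun hx k hk => (h k hk).symm ▸ hx k hk⟩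

lemma continuous_itr [TopologicalSpace X] {f : ℕ → X → X} (hf : ∀ n, Continuous (f n))
    (n : ℕ) : ∀ k, Continuous (itr f n k)
  | 0 => continuous_id
  | k + 1 => (hf (n + k)).comp (continuous_itr hf n k)

lemma itinSet_closed [TopologicalSpace X] {f : ℕ → X → X} (hf : ∀ n, Continuous (f n))
    {V : Fin N → Set X} (hVcl : ∀ i, IsClosed (V i)) (α : SigmaA A) (m n : ℕ) :
    IsClosed (itinSet f V α m n) := by
  apply isClosed_biInter
  exact fun k _ => (hVcl _).preimage (continuous_itr hf n k)

lemma itinSet_nonempty {f : ℕ → X → X} {V : Fin N → Set X} (hVne : ∀ i, (V i).Nonempty)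
    (hexp : ∀ n : ℕ, ∀ i : Fin N, (⋃ j ∈ {j | A i j = 1}, V j) ⊆ f n '' V i) :
    ∀ (m : ℕ) (α : SigmaA A) (n : ℕ), (itinSet f V α m n).Nonempty
  | 0, α, n => by
    obtain ⟨x, hx⟩ := hVne (α.1 0)
    exact ⟨x, mem_itinSet.2 fun k hk => by
      interval_cases k; exact hx⟩
  | m + 1, α, n => by
    obtain ⟨y, hy⟩ := itinSet_nonempty hVne hexp m (shiftA α) (n + 1)
    have hy0 : y ∈ V (α.1 1) := by
      have := mem_itinSet.1 hy 0 (Nat.zero_le _)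
      exact this
    have : y ∈ f n '' V (α.1 0) := by
      apply hexp n (α.1 0)
      exact Set.mem_biUnion (α.2 0) hy0
    obtain ⟨x, hx, rfl⟩ := this
    exact ⟨x, (itinSet_succ f V α m n) ▸ ⟨hx, hy⟩⟩

lemma shiftA_iterate_coord (α : SigmaA A) : ∀ (j k : ℕ), (shiftA^[j] α).1 k = α.1 (k + j)
  | 0, k => rfl
  | j + 1, k => by
    rw [Function.iterate_succ_apply, shiftA_iterate_coord (shiftA α) j k]
    show α.1 (k + j + 1) = α.1 (k + (j+1)); ring_nf

instance : TopologicalSpace (SigmaA A) :=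
  inferInstanceAs (TopologicalSpace {s : ℕ → Fin N // ∀ j : ℕ, A (s j) (s (j + 1)) = 1})

lemma continuous_coordA (k : ℕ) : Continuous (fun α : SigmaA A => α.1 k) :=
  (continuous_apply k).comp continuous_subtype_val

instance : CompactSpace (SigmaA A) := by
  have h : IsClosed {s : ℕ → Fin N | ∀ j : ℕ, A (s j) (s (j + 1)) = 1} := by
    have e : {s : ℕ → Fin N | ∀ j : ℕ, A (s j) (s (j + 1)) = 1}
        = ⋂ j : ℕ, (fun s : ℕ → Fin N => (s j, s (j+1))) ⁻¹' {p : Fin N × Fin N | A p.1 p.2 = 1} := by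
      ext s; simp
    rw [e]
    refine isClosed_iInter (fun j => ?_)
    have : Continuous (fun s : ℕ → Fin N => (s j, s (j+1))) :=
      (continuous_apply j).prodMk (continuous_apply (j+1))
    exact IsClosed.preimage this (isClosed_discrete _)
  exact isCompact_iff_compactSpace.mp h.isCompact

lemma cylinder_isOpen (α : SigmaA A) (M : ℕ) :
    IsOpen {β : SigmaA A | ∀ k ≤ M, β.1 k = α.1 k} := by
  have : {β : SigmaA A | ∀ k ≤ M, β.1 k = α.1 k}
      = ⋂ k ∈ Finset.range (M + 1), {β : SigmaA A | β.1 k = α.1 k} := by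
    ext β; simp [Nat.lt_succ_iff]
  rw [this]
  apply isOpen_biInter_finset
  intro k _
  exact (isOpen_discrete {α.1 k}).preimage (continuous_coordA k)

lemma uniform_shrink [UniformSpace X]
    (f : ℕ → X → X) (V : Fin N → Set X)
    (hshrink : ∀ α : SigmaA A, ∀ γ ∈ 𝓤 X, ∃ M : ℕ, 1 ≤ M ∧ ∀ m ≥ M, ∀ n : ℕ,
      ∀ x ∈ itinSet f V α m n, ∀ y ∈ itinSet f V α m n, (x, y) ∈ γ)
    {γ : Set (X × X)} (hγ : γ ∈ 𝓤 X) :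
    ∃ M : ℕ, 1 ≤ M ∧ ∀ (α : SigmaA A) (n m : ℕ), M ≤ m →
      ∀ x ∈ itinSet f V α m n, ∀ y ∈ itinSet f V α m n, (x, y) ∈ γ := by
  choose Mf hM1 hMspec using fun α => hshrink α γ hγ
  have hcover : (Set.univ : Set (SigmaA A)) ⊆
      ⋃ α : SigmaA A, {β : SigmaA A | ∀ k ≤ Mf α, β.1 k = α.1 k} :=
    fun β _ => Set.mem_iUnion.2 ⟨β, fun k _ => rfl⟩
  obtain ⟨t, ht⟩ := isCompact_univ.elim_finite_subcover _
    (fun α => cylinder_isOpen α (Mf α)) hcover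
  refine ⟨t.sup Mf + 1, by omega, ?_⟩
  intro β n m hm x hx y hy
  have hβ' : β ∈ ⋃ α ∈ t, {β : SigmaA A | ∀ k ≤ Mf α, β.1 k = α.1 k} := ht (Set.mem_univ β)
  obtain ⟨α, hαt, hβ⟩ := Set.mem_iUnion₂.1 hβ'
  have hMα : Mf α ≤ m := le_trans (le_trans (Finset.le_sup hαt) (by omega)) hm
  have hsub : itinSet f V β m n ⊆ itinSet f V α (Mf α) n := by
    rw [← itinSet_congr (fun k hk => hβ k hk) n]
    exact itinSet_anti f V β hMα n
  exact hMspec α (Mf α) le_rfl n x (hsub hx) y (hsub hy)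

lemma rho_prefix (M : ℕ) (α β : SigmaA A) (h : rho α β < (1/2 : ℝ)^M) :
    ∀ k ≤ M, α.1 k = β.1 k := by
  intro k hk
  by_contra hne
  set g : ℕ → ℝ := fun i => if α.1 i = β.1 i then 0 else (1/2:ℝ)^i with hg0
  have hgnn : ∀ i, 0 ≤ g i := by
    intro i; dsimp [g]; split
    · exact le_rfl
    · positivity
  have hg : Summable g := by
    apply Summable.of_nonneg_of_le hgnn _ summable_geometric_two
    intro i; dsimp [g]; split
    · positivity
    · exact le_rfl
  have hterm : g k ≤ rho α β := Summable.le_tsum hg k (fun j _ => hgnn j)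
  have hgk : g k = (1/2:ℝ)^k := if_neg hne
  have hmono : (1/2:ℝ)^M ≤ (1/2:ℝ)^k :=
    pow_le_pow_of_le_one (by norm_num) (by norm_num) hk
  rw [hgk] at hterm
  linarith

def wordFinset (A : Matrix (Fin N) (Fin N) ℕ) (L : ℕ) (i : Fin N) :
    Finset (Fin (L + 1) → Fin N) :=
  Finset.univ.filter fun w => (∀ k : Fin L, A (w k.castSucc) (w k.succ) = 1) ∧ w 0 = i

lemma wordFinset_card (A : Matrix (Fin N) (Fin N) ℕ)
    (hA : ∀ i j, A i j = 0 ∨ A i j = 1) :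
    ∀ (L : ℕ) (i : Fin N), (wordFinset A L i).card ≤ ∑ j, (A ^ L) i j
  | 0, i => by
    have h1 : (wordFinset A 0 i).card ≤ 1 := by
      apply Finset.card_le_one.2
      intro w hw w' hw'
      simp only [wordFinset, Finset.mem_filter] at hw hw'
      funext k
      have : k = 0 := Fin.fin_one_eq_zero k
      rw [this, hw.2.2, hw'.2.2]
    calc (wordFinset A 0 i).card ≤ 1 := h1
      _ = ∑ j, (A ^ 0) i j := by simp [Matrix.one_apply]
  | L + 1, i => by
    classical
    set tgt : Finset (Fin (L + 1) → Fin N) :=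
      (Finset.univ.filter fun j => A i j = 1).biUnion (fun j => wordFinset A L j) with htgt
    have hmap : ∀ w ∈ wordFinset A (L + 1) i, Fin.tail w ∈ tgt := by
      intro w hw
      simp only [wordFinset, Finset.mem_filter, Finset.mem_univ, true_and] at hw
      have h1 : A i (w 1) = 1 := by
        have := hw.1 0
        simpa [hw.2] using this
      apply Finset.mem_biUnion.2
      refine ⟨w 1, by simp [h1], ?_⟩
      simp only [wordFinset, Finset.mem_filter, Finset.mem_univ, true_and]
      constructor
      · intro k
        have := hw.1 k.succ
        exact this
      · rfl
    have hinj : Set.InjOn (fun w : Fin (L+2) → Fin N => Fin.tail w)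
        (wordFinset A (L + 1) i) := by
      intro w hw w' hw' h
      simp only [wordFinset, Finset.coe_filter, Set.mem_setOf_eq] at hw hw'
      have e1 : w = Fin.cons i (Fin.tail w) := by rw [← hw.2.2, Fin.cons_self_tail]
      have e2 : w' = Fin.cons i (Fin.tail w') := by rw [← hw'.2.2, Fin.cons_self_tail]
      rw [e1, e2]; exact congrArg _ h
    calc (wordFinset A (L + 1) i).card ≤ tgt.card :=
          Finset.card_le_card_of_injOn _ hmap hinj
      _ ≤ ∑ j ∈ Finset.univ.filter fun j => A i j = 1, (wordFinset A L j).card :=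
          Finset.card_biUnion_le
      _ ≤ ∑ j ∈ Finset.univ.filter fun j => A i j = 1, A i j * ∑ k, (A ^ L) j k := by
          apply Finset.sum_le_sum
          intro j hj
          simp only [Finset.mem_filter] at hj
          rw [hj.2, one_mul]
          exact wordFinset_card A hA L j
      _ ≤ ∑ j, A i j * ∑ k, (A ^ L) j k := by
          apply Finset.sum_le_sum_of_subset_of_nonneg (Finset.filter_subset _ _)
          intro j _ _; positivity
      _ = ∑ k, (A ^ (L + 1)) i k := by
          rw [pow_succ']
          simp_rw [Matrix.mul_apply, Finset.mul_sum]
          rw [Finset.sum_comm]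

def Tnum (A : Matrix (Fin N) (Fin N) ℕ) (L : ℕ) : ℕ := ∑ i, ∑ j, (A ^ L) i j

lemma rowsum_pos (A : Matrix (Fin N) (Fin N) ℕ) (hrow : ∀ i, ∃ j, A i j = 1) :
    ∀ (L : ℕ) (i : Fin N), 1 ≤ ∑ j, (A ^ L) i j
  | 0, i => by simp [Matrix.one_apply]
  | L + 1, i => by
    have key : ∀ k, 1 ≤ ∑ j, A k j := by
      intro k
      obtain ⟨j, hj⟩ := hrow k
      calc 1 = A k j := hj.symm
        _ ≤ ∑ j, A k j := Finset.single_le_sum (fun _ _ => Nat.zero_le _) (Finset.mem_univ j)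
    calc 1 ≤ ∑ k, (A ^ L) i k := rowsum_pos A hrow L i
      _ ≤ ∑ k, (A ^ L) i k * ∑ j, A k j := by
          apply Finset.sum_le_sum; intro k _
          exact Nat.le_mul_of_pos_right _ (key k)
      _ = ∑ j, (A ^ (L + 1)) i j := by
          rw [pow_succ]
          simp_rw [Matrix.mul_apply, Finset.mul_sum]
          rw [Finset.sum_comm]

lemma Tnum_pos (A : Matrix (Fin N) (Fin N) ℕ) (hrow : ∀ i, ∃ j, A i j = 1)
    (hN : 1 ≤ N) (L : ℕ) : 1 ≤ Tnum A L := by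
  calc 1 ≤ ∑ j, (A ^ L) (⟨0, hN⟩ : Fin N) j := rowsum_pos A hrow L _
    _ ≤ Tnum A L := Finset.single_le_sum (f := fun i => ∑ j, (A ^ L) i j)
        (fun _ _ => Nat.zero_le _) (Finset.mem_univ _)

lemma Tnum_submul (A : Matrix (Fin N) (Fin N) ℕ) (m k : ℕ) :
    Tnum A (m + k) ≤ Tnum A m * Tnum A k := by
  have step : ∀ i, ∑ j, (A ^ (m + k)) i j ≤ (∑ l, (A ^ m) i l) * Tnum A k := by
    intro i
    calc ∑ j, (A ^ (m + k)) i j = ∑ l, (A ^ m) i l * ∑ j, (A ^ k) l j := by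
          rw [pow_add]
          simp_rw [Matrix.mul_apply, Finset.mul_sum]
          rw [Finset.sum_comm]
      _ ≤ ∑ l, (A ^ m) i l * Tnum A k := by
          apply Finset.sum_le_sum; intro l _
          apply Nat.mul_le_mul_left
          exact Finset.single_le_sum (f := fun l' => ∑ j, (A ^ k) l' j)
            (fun _ _ => Nat.zero_le _) (Finset.mem_univ l)
      _ = (∑ l, (A ^ m) i l) * Tnum A k := by rw [Finset.sum_mul]
  calc Tnum A (m + k) = ∑ i, ∑ j, (A ^ (m + k)) i j := rfl
    _ ≤ ∑ i, (∑ l, (A ^ m) i l) * Tnum A k := Finset.sum_le_sum (fun i _ => step i)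
    _ = Tnum A m * Tnum A k := by rw [← Finset.sum_mul]; rfl

lemma log_lamA (A : Matrix (Fin N) (Fin N) ℕ) (hA : IsTransition A) (hN : 1 ≤ N) :
    ∃ ℓ : ℝ, Real.log (lamA A) = ℓ ∧
      ∀ c : ℕ, Filter.Tendsto (fun n : ℕ => Real.log (Tnum A (n + c)) / n) atTop (nhds ℓ) := by
  set u : ℕ → ℝ := fun n => Real.log (Tnum A n) with hu
  have hTpos : ∀ n, (0 : ℝ) < (Tnum A n : ℝ) := by
    intro n
    exact_mod_cast Nat.lt_of_lt_of_le Nat.zero_lt_one (Tnum_pos A hA.2.1 hN n)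
  have hT1 : ∀ n, (1 : ℝ) ≤ (Tnum A n : ℝ) := by
    intro n; exact_mod_cast Tnum_pos A hA.2.1 hN n
  have hunn : ∀ n, 0 ≤ u n := fun n => Real.log_nonneg (hT1 n)
  have hsub : Subadditive u := by
    intro m n
    have h1 : (Tnum A (m + n) : ℝ) ≤ (Tnum A m : ℝ) * (Tnum A n : ℝ) := by
      exact_mod_cast Tnum_submul A m n
    calc u (m + n) ≤ Real.log ((Tnum A m : ℝ) * (Tnum A n : ℝ)) :=
          Real.log_le_log (hTpos _) h1
      _ = u m + u n := Real.log_mul (hTpos m).ne' (hTpos n).ne'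
  have hbdd : BddBelow (Set.range fun n : ℕ => u n / n) := by
    refine ⟨0, ?_⟩
    rintro x ⟨n, rfl⟩
    positivity
  have htend := hsub.tendsto_lim hbdd
  refine ⟨hsub.lim, ?_, ?_⟩
  · have hev : ∀ᶠ n : ℕ in atTop, ((Tnum A n : ℝ)) ^ ((n : ℝ)⁻¹) = Real.exp (u n / n) := by
      filter_upwards [eventually_ge_atTop 1] with n hn
      rw [Real.rpow_def_of_pos (hTpos n), div_eq_mul_inv]
    have htend2 : Filter.Tendsto (fun n : ℕ => ((Tnum A n : ℝ)) ^ ((n : ℝ)⁻¹)) atTop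
        (nhds (Real.exp hsub.lim)) := by
      have hev' : (fun n : ℕ => Real.exp (u n / n)) =ᶠ[atTop]
          fun n : ℕ => ((Tnum A n : ℝ)) ^ ((n : ℝ)⁻¹) := hev.mono fun n h => h.symm
      exact Filter.Tendsto.congr' hev' (Real.continuous_exp.continuousAt.tendsto.comp htend)
    have : lamA A = Real.exp hsub.lim := htend2.limsup_eq
    rw [this, Real.log_exp]
  · intro c
    have haux : Filter.Tendsto (fun n : ℕ => u (n + c) / (n + c : ℕ)) atTop (nhds hsub.lim) :=
      htend.comp (tendsto_add_atTop_nat c)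
    have hone : Filter.Tendsto (fun n : ℕ => 1 + (c : ℝ) / n) atTop (nhds (1 + 0)) :=
      tendsto_const_nhds.add (tendsto_const_div_atTop_nhds_zero_nat (c : ℝ))
    rw [add_zero] at hone
    have hprod := haux.mul hone
    rw [mul_one] at hprod
    apply Filter.Tendsto.congr' _ hprod
    filter_upwards [eventually_ge_atTop 1] with n hn
    have hn0 : (n : ℝ) ≠ 0 := Nat.cast_ne_zero.2 (by omega)
    have hnc : ((n + c : ℕ) : ℝ) ≠ 0 := Nat.cast_ne_zero.2 (by omega)
    have e1 : (1 : ℝ) + (c : ℝ) / n = ((n + c : ℕ) : ℝ) / n := by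
      push_cast; field_simp
    rw [e1, div_mul_div_comm, mul_comm (u (n + c)) _, mul_div_mul_left _ _ hnc]

end Aux

/-- For an `A`-coupled-expanding system whose itinerary sets shrink uniformly
(condition (ii)), every itinerary determines a unique point `x_n(α)`; the resulting sets
`Λ_n = {x_n(α)}` are nonempty and compact with `f_n(Λ_n) = Λ_{n+1}`, the maps
`π_n(α) = x_n(α)` form an equi-continuous family semiconjugating the shift `σ_A` to the
subsystem; consequently `h(f_{0,∞}, Λ_0) ≤ log λ(A)`. -/
theorem coupled_expanding_upper_bound {X : Type*} [UniformSpace X] [CompactSpace X]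
    [T2Space X]
    (f : ℕ → X → X) (hf : ∀ n, Continuous (f n))
    (N : ℕ) (hN : 2 ≤ N) (A : Matrix (Fin N) (Fin N) ℕ) (hA : IsTransition A)
    (V : Fin N → Set X) (hVne : ∀ i, (V i).Nonempty) (hVcl : ∀ i, IsClosed (V i))
    (hexp : ∀ n : ℕ, ∀ i : Fin N, (⋃ j ∈ {j | A i j = 1}, V j) ⊆ f n '' V i)
    (hshrink : ∀ α : SigmaA A, ∀ γ ∈ 𝓤 X, ∃ M : ℕ, 1 ≤ M ∧ ∀ m ≥ M, ∀ n : ℕ,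
      ∀ x ∈ itinSet f V α m n, ∀ y ∈ itinSet f V α m n, (x, y) ∈ γ) :
    ∃ x : SigmaA A → ℕ → X,
      (∀ α n, (⋂ m : ℕ, itinSet f V α m n) = {x α n}) ∧
      (∀ n, (Set.range fun α => x α n).Nonempty) ∧
      (∀ n, IsCompact (Set.range fun α => x α n)) ∧
      (∀ n, (Set.range fun α => x α n) ⊆ ⋃ i, V i) ∧
      (∀ n, f n '' (Set.range fun α => x α n) = Set.range fun α => x α (n + 1)) ∧
      (∀ α n, f n (x α n) = x (shiftA α) (n + 1)) ∧
      (∀ γ ∈ 𝓤 X, ∃ δ : ℝ, 0 < δ ∧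
        ∀ α β : SigmaA A, ∀ n : ℕ, rho α β < δ → (x α n, x β n) ∈ γ) ∧
      entropy f (Set.range fun α => x α 0) ≤ (Real.log (lamA A) : EReal) := by
  classical
  -- nonemptiness and uniqueness of the intersection point
  have hne : ∀ (α : SigmaA A) (n : ℕ), (⋂ m : ℕ, itinSet f V α m n).Nonempty := by
    intro α n
    apply IsCompact.nonempty_iInter_of_sequence_nonempty_isCompact_isClosed
    · exact fun m => itinSet_anti f V α (Nat.le_succ m) n
    · exact fun m => itinSet_nonempty hVne hexp m α n
    · exact (itinSet_closed hf hVcl α 0 n).isCompact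
    · exact fun m => itinSet_closed hf hVcl α m n
  have huniq : ∀ (α : SigmaA A) (n : ℕ), ∀ x ∈ ⋂ m : ℕ, itinSet f V α m n,
      ∀ y ∈ ⋂ m : ℕ, itinSet f V α m n, x = y := by
    intro α n x hx y hy
    apply eq_of_uniformity
    intro γ hγ
    obtain ⟨M, _, hM⟩ := hshrink α γ hγ
    exact hM M le_rfl n x (Set.mem_iInter.1 hx M) y (Set.mem_iInter.1 hy M)
  set xp : SigmaA A → ℕ → X := fun α n => (hne α n).some with hxp
  have hxmem : ∀ α n, xp α n ∈ ⋂ m : ℕ, itinSet f V α m n := fun α n => (hne α n).some_mem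
  have hxmem' : ∀ α n m, xp α n ∈ itinSet f V α m n :=
    fun α n m => Set.mem_iInter.1 (hxmem α n) m
  have hsingle : ∀ α n, (⋂ m : ℕ, itinSet f V α m n) = {xp α n} := by
    intro α n
    ext z
    constructor
    · intro hz
      exact huniq α n z hz _ (hxmem α n)
    · intro hz
      rw [Set.mem_singleton_iff] at hz
      rw [hz]; exact hxmem α n
  -- the semiconjugacy
  have hsemi : ∀ (α : SigmaA A) (n : ℕ), f n (xp α n) = xp (shiftA α) (n + 1) := by
    intro α n
    have hmem : f n (xp α n) ∈ ⋂ m : ℕ, itinSet f V (shiftA α) m (n + 1) := by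
      apply Set.mem_iInter.2
      intro m
      have := hxmem' α n (m + 1)
      rw [itinSet_succ] at this
      exact this.2
    rw [hsingle] at hmem
    exact hmem
  -- iterated semiconjugacy
  have hiter : ∀ (α : SigmaA A) (n : ℕ), ∀ j : ℕ,
      itr f n j (xp α n) = xp (shiftA^[j] α) (n + j) := by
    intro α n j
    induction j with
    | zero => rfl
    | succ j ih =>
      show f (n + j) (itr f n j (xp α n)) = _
      rw [ih, hsemi, Function.iterate_succ_apply']
  -- a point of SigmaA
  have hNfin : 1 ≤ N := by omega
  let s0 : ℕ → Fin N := fun n => Nat.rec (⟨0, hNfin⟩ : Fin N)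
    (fun _ prev => (hA.2.1 prev).choose) n
  have hs0 : ∀ j : ℕ, A (s0 j) (s0 (j + 1)) = 1 := fun j => (hA.2.1 (s0 j)).choose_spec
  let σ0 : SigmaA A := ⟨s0, hs0⟩
  -- shift is surjective
  have hshift_surj : ∀ β : SigmaA A, ∃ α : SigmaA A, shiftA α = β := by
    intro β
    obtain ⟨i, hi⟩ := hA.2.2 (β.1 0)
    refine ⟨⟨fun k => Nat.casesOn k i (fun k' => β.1 k'), ?_⟩, ?_⟩
    · intro j
      cases j with
      | zero => exact hi
      | succ j => exact β.2 j
    · apply Subtype.ext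
      funext k
      rfl
  -- prefix-dependence of xp: needed repeatedly
  have hprefix : ∀ (α β : SigmaA A) (n M : ℕ), (∀ k ≤ M, α.1 k = β.1 k) →
      ∀ γ : Set (X × X), (∀ x ∈ itinSet f V α M n, ∀ y ∈ itinSet f V α M n, (x, y) ∈ γ) →
      (xp α n, xp β n) ∈ γ := by
    intro α β n M hagree γ hsmall
    apply hsmall _ (hxmem' α n M)
    rw [itinSet_congr hagree n]
    exact hxmem' β n M
  -- continuity of each π_n
  have hcont : ∀ n : ℕ, Continuous (fun α : SigmaA A => xp α n) := by
    intro n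
    rw [continuous_iff_continuousAt]
    intro α
    rw [ContinuousAt, Uniform.tendsto_nhds_right, Filter.tendsto_def]
    intro γ hγ
    obtain ⟨M, _, hM⟩ := hshrink α γ hγ
    apply Filter.mem_of_superset
      (IsOpen.mem_nhds (cylinder_isOpen α M) (fun k _ => rfl))
    intro β hβ
    exact hprefix α β n M (fun k hk => (hβ k hk).symm) γ (hM M le_rfl n)
  refine ⟨xp, fun α n => hsingle α n, ?_, ?_, ?_, ?_, fun α n => hsemi α n, ?_, ?_⟩
  · -- nonempty
    exact fun n => ⟨xp σ0 n, Set.mem_range_self σ0⟩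
  · -- compact
    intro n
    rw [← Set.image_univ]
    exact isCompact_univ.image (hcont n)
  · -- contained in union of the V i
    intro n
    rintro _ ⟨α, rfl⟩
    have := mem_itinSet.1 (hxmem' α n 0) 0 le_rfl
    exact Set.mem_iUnion.2 ⟨α.1 0, this⟩
  · -- the image property
    intro n
    apply Set.Subset.antisymm
    · rintro _ ⟨_, ⟨α, rfl⟩, rfl⟩
      exact ⟨shiftA α, (hsemi α n).symm⟩
    · rintro _ ⟨β, rfl⟩
      obtain ⟨α, hα⟩ := hshift_surj β
      exact ⟨xp α n, Set.mem_range_self α, by rw [hsemi, hα]⟩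
  · -- equi-continuity
    intro γ hγ
    obtain ⟨M, _, hM⟩ := uniform_shrink f V hshrink hγ
    refine ⟨(1/2 : ℝ)^M, by positivity, ?_⟩
    intro α β n hρ
    exact hprefix α β n M (rho_prefix M α β hρ) γ (hM α n M le_rfl)
  · -- the entropy bound
    set Λ0 : Set X := Set.range fun α => xp α 0 with hΛ0
    obtain ⟨ℓ, hℓeq, hℓ⟩ := log_lamA A hA hNfin
    rw [hℓeq]
    show (⨆ γ ∈ 𝓤 X, atTop.limsup fun n : ℕ =>
      ((Real.log (sepCard f Λ0 n γ) / n : ℝ) : EReal)) ≤ (ℓ : EReal)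
    refine iSup₂_le fun γ hγ => ?_
    obtain ⟨M, hM1, hM⟩ := uniform_shrink f V hshrink hγ
    -- counting bound on separated sets
    have hsep : ∀ n : ℕ, 1 ≤ n → sepCard f Λ0 n γ ≤ Tnum A (n + (M - 1)) := by
      intro n hn
      set L : ℕ := n + (M - 1) with hL
      apply csSup_le
      · exact ⟨0, (∅ : Finset X), by simp, fun x hx => absurd hx (by simp), rfl⟩
      · rintro m ⟨E, hEsub, hEsep, rfl⟩
        -- choose itineraries
        have hpick : ∀ x : X, x ∈ Λ0 → ∃ α : SigmaA A, xp α 0 = x := fun x hx => hx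
        set pick : X → SigmaA A := fun x =>
          if h : ∃ α : SigmaA A, xp α 0 = x then h.choose else σ0 with hpickdef
        have hpick_spec : ∀ x ∈ Λ0, xp (pick x) 0 = x := by
          intro x hx
          have h : ∃ α : SigmaA A, xp α 0 = x := hpick x hx
          rw [hpickdef]
          simp only [dif_pos h]
          exact h.choose_spec
        set F : X → (Fin (L + 1) → Fin N) := fun x k => (pick x).1 k with hF
        have hL1 : n + M = L + 1 := by omega
        -- F maps E into admissible words
        have hmaps : ∀ x ∈ E, F x ∈ Finset.univ.biUnion (fun i => wordFinset A L i) := by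
          intro x hx
          apply Finset.mem_biUnion.2
          refine ⟨(pick x).1 0, Finset.mem_univ _, ?_⟩
          simp only [wordFinset, Finset.mem_filter, Finset.mem_univ, true_and]
          constructor
          · intro k
            have := (pick x).2 k
            simpa [hF] using this
          · rfl
        -- F is injective on E
        have hinj : Set.InjOn F E := by
          intro x hx y hy hxy
          by_contra hne2
          obtain ⟨j, hj, hγ'⟩ := hEsep x hx y hy hne2
          apply hγ'
          have hxΛ : x ∈ Λ0 := hEsub hx
          have hyΛ : y ∈ Λ0 := hEsub hy
          have hx0 : itr f 0 j x = xp (shiftA^[j] (pick x)) j := by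
            conv_lhs => rw [← hpick_spec x hxΛ]
            have := hiter (pick x) 0 j
            simpa using this
          have hy0 : itr f 0 j y = xp (shiftA^[j] (pick y)) j := by
            conv_lhs => rw [← hpick_spec y hyΛ]
            have := hiter (pick y) 0 j
            simpa using this
          rw [hx0, hy0]
          apply hprefix _ _ j M ?_ γ (hM _ j M le_rfl)
          intro k hk
          rw [shiftA_iterate_coord, shiftA_iterate_coord]
          have hlt : k + j < L + 1 := by omega
          have : F x ⟨k + j, hlt⟩ = F y ⟨k + j, hlt⟩ := by rw [hxy]
          simpa [hF] using this
        calc E.card ≤ (Finset.univ.biUnion (fun i => wordFinset A L i)).card :=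
              Finset.card_le_card_of_injOn F hmaps hinj
          _ ≤ ∑ i, (wordFinset A L i).card := Finset.card_biUnion_le
          _ ≤ ∑ i, ∑ j, (A ^ L) i j :=
              Finset.sum_le_sum (fun i _ => wordFinset_card A hA.1 L i)
          _ = Tnum A L := rfl
    -- pass to limsup
    have hT1 : ∀ L, (1 : ℝ) ≤ (Tnum A L : ℝ) := by
      intro L; exact_mod_cast Tnum_pos A hA.2.1 hNfin L
    have hcompare : (fun n : ℕ => ((Real.log (sepCard f Λ0 n γ) / n : ℝ) : EReal)) ≤ᶠ[atTop]
        fun n : ℕ => ((Real.log (Tnum A (n + (M - 1))) / n : ℝ) : EReal) := by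
      filter_upwards [eventually_ge_atTop 1] with n hn
      have hnpos : (0 : ℝ) < n := by exact_mod_cast hn
      apply EReal.coe_le_coe_iff.2
      apply div_le_div_of_nonneg_right ?_ hnpos.le
      rcases Nat.eq_zero_or_pos (sepCard f Λ0 n γ) with h0 | hpos
      · rw [h0]
        simpa using Real.log_nonneg (hT1 (n + (M - 1)))
      · apply Real.log_le_log (by exact_mod_cast hpos)
        exact_mod_cast hsep n hn
    have htendE : Filter.Tendsto
        (fun n : ℕ => ((Real.log (Tnum A (n + (M - 1))) / n : ℝ) : EReal)) atTop
        (nhds (ℓ : EReal)) :=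
      (continuous_coe_real_ereal.continuousAt.tendsto).comp (hℓ (M - 1))
    calc atTop.limsup (fun n : ℕ => ((Real.log (sepCard f Λ0 n γ) / n : ℝ) : EReal))
        ≤ atTop.limsup (fun n : ℕ =>
            ((Real.log (Tnum A (n + (M - 1))) / n : ℝ) : EReal)) :=
          Filter.limsup_le_limsup hcompare
      _ = (ℓ : EReal) := htendE.limsup_eq
end
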